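/- For every real number p ≥ 1 and all u, v ∈ ℝⁿ, ‖iₚ(u) − iₚ(v)‖ ≤ ((p+1) · 2^{p−2})^{1/p} · ‖u − v‖^{1/p}, i.e., the map iₚ is Hölder continuous with exponent 1/p and constant ((p+1) 2^{p−2})^{1/p}. -/

import Mathlib

open scoped InnerProductSpace
open Classical

/-- The map `iₚ(x) = x / ‖x‖^(1 - 1/p)` for `x ≠ 0`, and `iₚ(0) = 0`. -/
noncomputable def ip {n : ℕ} (p : ℝ) (x : EuclideanSpace ℝ (Fin n)) :
    EuclideanSpace ℝ (Fin n) :=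
  if x = 0 then 0 else (‖x‖ ^ (1 - 1 / p))⁻¹ • x

private lemma rpow_pred_mul_self (C p : ℝ) (hC : 0 ≤ C) (hp : 1 ≤ p) :
    C ^ (p - 1) * C = C ^ p := by
  have h : p - 1 + 1 = p := by ring
  rw [← Real.rpow_add_one' hC (by rw [h]; intro h0; simp [h0] at hp; linarith), h]

private lemma power_mean (A B p : ℝ) (hA : 0 ≤ A) (hB : 0 ≤ B) (hp : 1 ≤ p) :
    (A + B) ^ p ≤ 2 ^ (p - 1) * (A ^ p + B ^ p) := by
  have h := NNReal.rpow_add_le_mul_rpow_add_rpow A.toNNReal B.toNNReal hp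
  have := NNReal.coe_le_coe.2 h
  push_cast at this
  rwa [Real.coe_toNNReal _ hA, Real.coe_toNNReal _ hB] at this

private lemma key_scalar (A B D p : ℝ) (hp : 1 ≤ p) (hB : 0 ≤ B) (hBA : B ≤ A)
    (hD : 0 ≤ D) (hDS : D ≤ A + B) :
    2 ^ (2 - p) * D ^ (p + 1) ≤
      (A ^ (p - 1) - B ^ (p - 1)) * (A ^ 2 - B ^ 2)
        + (A ^ (p - 1) + B ^ (p - 1)) * D ^ 2 := by
  have hA : 0 ≤ A := hB.trans hBA
  have hr : B ^ (p - 1) ≤ A ^ (p - 1) := Real.rpow_le_rpow hB hBA (by linarith)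
  have hsq : B ^ 2 ≤ A ^ 2 := by nlinarith
  have hfirst : 0 ≤ (A ^ (p - 1) - B ^ (p - 1)) * (A ^ 2 - B ^ 2) :=
    mul_nonneg (by linarith) (by linarith)
  rcases eq_or_lt_of_le hD with hD0 | hDpos
  · rw [← hD0, Real.zero_rpow (by linarith)]
    nlinarith
  have hS : 0 < A + B := lt_of_lt_of_le hDpos hDS
  set S := A + B with hSdef
  -- the core inequality at D = S
  have hApow := rpow_pred_mul_self A p hA hp
  have hBpow := rpow_pred_mul_self B p hB hp
  have hid : (A ^ (p - 1) - B ^ (p - 1)) * (A ^ 2 - B ^ 2)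
      + (A ^ (p - 1) + B ^ (p - 1)) * S ^ 2 = 2 * (A ^ p + B ^ p) * S := by
    linear_combination (2 * (A + B)) * hApow + (2 * (A + B)) * hBpow
  have h2 : (2:ℝ) ^ (2 - p) * 2 ^ (p - 1) = 2 := by
    rw [← Real.rpow_add (by norm_num)]; norm_num
  have hSpow : S ^ p * S = S ^ (p + 1) := by
    rw [Real.rpow_add_one hS.ne']
  have hstar : 2 ^ (2 - p) * S ^ (p + 1) ≤
      (A ^ (p - 1) - B ^ (p - 1)) * (A ^ 2 - B ^ 2)
        + (A ^ (p - 1) + B ^ (p - 1)) * S ^ 2 := by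
    have hPM : S ^ p ≤ 2 ^ (p - 1) * (A ^ p + B ^ p) := power_mean A B p hA hB hp
    have h2p : (0:ℝ) < 2 ^ (2 - p) := Real.rpow_pos_of_pos (by norm_num) _
    calc 2 ^ (2 - p) * S ^ (p + 1) = 2 ^ (2 - p) * (S ^ p * S) := by rw [hSpow]
      _ ≤ 2 ^ (2 - p) * ((2 ^ (p - 1) * (A ^ p + B ^ p)) * S) := by
          apply mul_le_mul_of_nonneg_left _ h2p.le
          exact mul_le_mul_of_nonneg_right hPM hS.le
      _ = (2 ^ (2 - p) * 2 ^ (p - 1)) * ((A ^ p + B ^ p) * S) := by ring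
      _ = 2 * (A ^ p + B ^ p) * S := by rw [h2]; ring
      _ = _ := hid.symm
  -- now transfer from S to D
  have hDp1 : D ^ (p + 1) ≤ S ^ (p + 1) :=
    Real.rpow_le_rpow hD hDS (by linarith)
  have hDpm1 : D ^ (p - 1) ≤ S ^ (p - 1) :=
    Real.rpow_le_rpow hD hDS (by linarith)
  have hsplitD : D ^ (p + 1) = D ^ 2 * D ^ (p - 1) := by
    rw [← Real.rpow_two, ← Real.rpow_add hDpos]; ring_nf
  have hsplitS : S ^ (p + 1) = S ^ 2 * S ^ (p - 1) := by
    rw [← Real.rpow_two, ← Real.rpow_add hS]; ring_nf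
  have hSp1pos : (0:ℝ) < S ^ (p + 1) := Real.rpow_pos_of_pos hS _
  rw [← mul_le_mul_iff_of_pos_right hSp1pos]
  have hDp1nn : 0 ≤ D ^ (p + 1) := Real.rpow_nonneg hD _
  calc 2 ^ (2 - p) * D ^ (p + 1) * S ^ (p + 1)
      = (2 ^ (2 - p) * S ^ (p + 1)) * D ^ (p + 1) := by ring
    _ ≤ ((A ^ (p - 1) - B ^ (p - 1)) * (A ^ 2 - B ^ 2)
          + (A ^ (p - 1) + B ^ (p - 1)) * S ^ 2) * D ^ (p + 1) :=
        mul_le_mul_of_nonneg_right hstar hDp1nn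
    _ = (A ^ (p - 1) - B ^ (p - 1)) * (A ^ 2 - B ^ 2) * D ^ (p + 1)
          + (A ^ (p - 1) + B ^ (p - 1)) * S ^ 2 * (D ^ 2 * D ^ (p - 1)) := by
        rw [← hsplitD]; ring
    _ ≤ (A ^ (p - 1) - B ^ (p - 1)) * (A ^ 2 - B ^ 2) * S ^ (p + 1)
          + (A ^ (p - 1) + B ^ (p - 1)) * S ^ 2 * (D ^ 2 * S ^ (p - 1)) := by
        have h1 := mul_le_mul_of_nonneg_left hDp1 hfirst
        have hc : 0 ≤ (A ^ (p - 1) + B ^ (p - 1)) * S ^ 2 * D ^ 2 := by positivity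
        have h2' := mul_le_mul_of_nonneg_left hDpm1 hc
        nlinarith [h1, h2']
    _ = ((A ^ (p - 1) - B ^ (p - 1)) * (A ^ 2 - B ^ 2)
          + (A ^ (p - 1) + B ^ (p - 1)) * D ^ 2) * S ^ (p + 1) := by
        rw [hsplitS]; ring

private lemma inner_identity {n : ℕ} (x y : EuclideanSpace ℝ (Fin n)) (r : ℝ) :
    2 * ⟪(‖x‖ ^ r) • x - (‖y‖ ^ r) • y, x - y⟫_ℝ =
      (‖x‖ ^ r - ‖y‖ ^ r) * (‖x‖ ^ 2 - ‖y‖ ^ 2)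
        + (‖x‖ ^ r + ‖y‖ ^ r) * ‖x - y‖ ^ 2 := by
  have h3 : ‖x - y‖ ^ 2 = ‖x‖ ^ 2 - 2 * ⟪x, y⟫_ℝ + ‖y‖ ^ 2 := norm_sub_sq_real x y
  rw [inner_sub_left, inner_sub_right, inner_sub_right, real_inner_smul_left,
    real_inner_smul_left, real_inner_smul_left, real_inner_smul_left,
    real_inner_self_eq_norm_sq, real_inner_self_eq_norm_sq, real_inner_comm y x, h3]
  rw [real_inner_comm y x]
  ring

private lemma mono_ineq {n : ℕ} (p : ℝ) (hp : 1 ≤ p) (x y : EuclideanSpace ℝ (Fin n)) :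
    2 ^ (1 - p) * ‖x - y‖ ^ (p + 1) ≤
      ⟪(‖x‖ ^ (p - 1)) • x - (‖y‖ ^ (p - 1)) • y, x - y⟫_ℝ := by
  wlog h : ‖y‖ ≤ ‖x‖ with H
  · have h' := H p hp y x (le_of_not_ge h)
    have e1 : (‖y‖ ^ (p - 1)) • y - (‖x‖ ^ (p - 1)) • x
        = -((‖x‖ ^ (p - 1)) • x - (‖y‖ ^ (p - 1)) • y) := by abel
    have e2 : y - x = -(x - y) := by abel
    rw [norm_sub_rev, e1, e2, inner_neg_neg] at h'
    exact h'
  have hkey := key_scalar ‖x‖ ‖y‖ ‖x - y‖ p hp (norm_nonneg y) h (norm_nonneg _)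
    (norm_sub_le x y)
  have hid := inner_identity x y (p - 1)
  have h2 : (2:ℝ) ^ (2 - p) = 2 * 2 ^ (1 - p) := by
    rw [show (2:ℝ) - p = 1 + (1 - p) by ring, Real.rpow_add (by norm_num), Real.rpow_one]
  rw [h2] at hkey
  linarith

private lemma j_ip {n : ℕ} (p : ℝ) (hp : 1 ≤ p) (u : EuclideanSpace ℝ (Fin n)) :
    (‖ip p u‖ ^ (p - 1)) • ip p u = u := by
  have hp0 : p ≠ 0 := by linarith
  by_cases hu : u = 0
  · simp [ip, hu]
  · have hnu : 0 < ‖u‖ := norm_pos_iff.mpr hu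
    rw [ip, if_neg hu]
    have hinv : (‖u‖ ^ (1 - 1 / p))⁻¹ = ‖u‖ ^ (1 / p - 1) := by
      rw [← Real.rpow_neg hnu.le]; ring_nf
    rw [hinv]
    have hc : (0:ℝ) < ‖u‖ ^ (1 / p - 1) := Real.rpow_pos_of_pos hnu _
    have hn : ‖(‖u‖ ^ (1 / p - 1)) • u‖ = ‖u‖ ^ (1 / p) := by
      rw [norm_smul, Real.norm_eq_abs, abs_of_pos hc, ← Real.rpow_add_one hnu.ne']
      ring_nf
    rw [hn, smul_smul, ← Real.rpow_mul hnu.le,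
      ← Real.rpow_add hnu]
    have : 1 / p * (p - 1) + (1 / p - 1) = 0 := by field_simp; ring
    rw [this, Real.rpow_zero, one_smul]

theorem ip_holder_continuous {n : ℕ}
    (p : ℝ) (hp : 1 ≤ p) (u v : EuclideanSpace ℝ (Fin n)) :
    ‖ip p u - ip p v‖ ≤ ((p + 1) * 2 ^ (p - 2)) ^ (1 / p) * ‖u - v‖ ^ (1 / p) := by
  have hp0 : p ≠ 0 := by linarith
  have hppos : 0 < p := by linarith
  set x := ip p u with hx
  set y := ip p v with hy
  have hjx : (‖x‖ ^ (p - 1)) • x = u := j_ip p hp u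
  have hjy : (‖y‖ ^ (p - 1)) • y = v := j_ip p hp v
  have hmono := mono_ineq p hp x y
  rw [hjx, hjy] at hmono
  have hcs : ⟪u - v, x - y⟫_ℝ ≤ ‖u - v‖ * ‖x - y‖ := real_inner_le_norm _ _
  set D := ‖x - y‖ with hDdef
  have hDnn : 0 ≤ D := norm_nonneg _
  have hCnn : (0:ℝ) ≤ (p + 1) * 2 ^ (p - 2) :=
    mul_nonneg (by linarith) (Real.rpow_nonneg (by norm_num) _)
  rcases eq_or_lt_of_le hDnn with hD0 | hDpos
  · rw [← hD0]
    exact mul_nonneg (Real.rpow_nonneg hCnn _) (Real.rpow_nonneg (norm_nonneg _) _)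
  · have hchain : 2 ^ (1 - p) * D ^ (p + 1) ≤ ‖u - v‖ * D := le_trans hmono hcs
    have hsplit : D ^ (p + 1) = D ^ p * D := Real.rpow_add_one hDpos.ne' p
    rw [hsplit, ← mul_assoc] at hchain
    have hstep : 2 ^ (1 - p) * D ^ p ≤ ‖u - v‖ :=
      le_of_mul_le_mul_right hchain hDpos
    have h2pos : (0:ℝ) < 2 ^ (p - 1) := Real.rpow_pos_of_pos (by norm_num) _
    have hDp : D ^ p ≤ 2 ^ (p - 1) * ‖u - v‖ := by
      have := mul_le_mul_of_nonneg_left hstep h2pos.le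
      have hcancel : (2:ℝ) ^ (p - 1) * 2 ^ (1 - p) = 1 := by
        rw [← Real.rpow_add (by norm_num)]; norm_num
      calc D ^ p = (2 ^ (p - 1) * 2 ^ (1 - p)) * D ^ p := by rw [hcancel, one_mul]
        _ = 2 ^ (p - 1) * (2 ^ (1 - p) * D ^ p) := by ring
        _ ≤ 2 ^ (p - 1) * ‖u - v‖ := mul_le_mul_of_nonneg_left hstep h2pos.le
    have hDp2 : D ^ p ≤ (p + 1) * 2 ^ (p - 2) * ‖u - v‖ := by
      have h22 : (2:ℝ) ^ (p - 1) ≤ (p + 1) * 2 ^ (p - 2) := by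
        have : (2:ℝ) ^ (p - 1) = 2 * 2 ^ (p - 2) := by
          rw [show p - 1 = 1 + (p - 2) by ring, Real.rpow_add (by norm_num), Real.rpow_one]
        rw [this]
        have h2nn : (0:ℝ) < 2 ^ (p - 2) := Real.rpow_pos_of_pos (by norm_num) _
        nlinarith
      calc D ^ p ≤ 2 ^ (p - 1) * ‖u - v‖ := hDp
        _ ≤ (p + 1) * 2 ^ (p - 2) * ‖u - v‖ :=
          mul_le_mul_of_nonneg_right h22 (norm_nonneg _)
    have hfinal := Real.rpow_le_rpow (Real.rpow_nonneg hDnn p) hDp2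
      (by positivity : (0:ℝ) ≤ 1 / p)
    have hDD : (D ^ p) ^ (1 / p) = D := by
      rw [← Real.rpow_mul hDnn, mul_one_div, div_self hp0, Real.rpow_one]
    rw [hDD, Real.mul_rpow hCnn (norm_nonneg _)] at hfinal
    exact hfinal
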